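/- Let X and Y be finite sets, μ a probability measure on X with μ(x) > 0 for all x, and R : X × Y → [0,∞) with Σ_y R(x,y) > 0 for every x and Σ_x R(x,y) > 0 for every y. Let φ, φ̃ : Y → ℝ and let ρ = ∇F(φ) and ρ̃ = ∇F(φ̃) be the Y-marginals of the associated couplings π(φ) and π(φ̃). Then the relative entropy between the marginals is dominated by the Bregman divergence of F: H(ρ̃|ρ) = Σ_y ρ̃(y) ln( ρ̃(y)/ρ(y) ) ≤ F(φ|φ̃), where F(φ|φ̃) = F(φ) − F(φ̃) − ⟨∇F(φ̃), φ − φ̃⟩. (Equivalently, the Bregman divergence of H_ν(ρ) = H(ρ|ν) is dominated by the Bregman divergence of F*.) -/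

import Mathlib

open scoped BigOperators

/-- The `+`-transform: `φ⁺(x) = ln( Σ_y e^{φ(y)} R(x,y) / μ(x) )`. -/
noncomputable def plusT {X Y : Type*} [Fintype Y] (μ : X → ℝ) (R : X → Y → ℝ)
    (φ : Y → ℝ) (x : X) : ℝ :=
  Real.log ((∑ y, Real.exp (φ y) * R x y) / μ x)

/-- The coupling `π(φ)(x,y) = e^{φ(y) − φ⁺(x)} R(x,y)`. -/
noncomputable def coupling {X Y : Type*} [Fintype Y] (μ : X → ℝ) (R : X → Y → ℝ)
    (φ : Y → ℝ) (x : X) (y : Y) : ℝ :=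
  Real.exp (φ y - plusT μ R φ x) * R x y

/-- The `Y`-marginal `∇F(φ)(y) = Σ_x π(φ)(x,y)` of the coupling `π(φ)`. -/
noncomputable def gradF {X Y : Type*} [Fintype X] [Fintype Y] (μ : X → ℝ)
    (R : X → Y → ℝ) (φ : Y → ℝ) (y : Y) : ℝ :=
  ∑ x, coupling μ R φ x y

/-- The functional `F(φ) = Σ_x μ(x) φ⁺(x)`. -/
noncomputable def Ffun {X Y : Type*} [Fintype X] [Fintype Y] (μ : X → ℝ)
    (R : X → Y → ℝ) (φ : Y → ℝ) : ℝ :=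
  ∑ x, μ x * plusT μ R φ x

/-- Auxiliary: `a - b ≤ a * log (a / b)` for `a ≥ 0`, `b > 0`. -/
lemma aux_sub_le_mul_log {a b : ℝ} (ha : 0 ≤ a) (hb : 0 < b) :
    a - b ≤ a * Real.log (a / b) := by
  rcases eq_or_lt_of_le ha with h | h
  · simp [← h, hb.le]
  · have h1 : Real.log (b / a) ≤ b / a - 1 := Real.log_le_sub_one_of_pos (by positivity)
    have h2 : Real.log (a / b) = - Real.log (b / a) := by
      rw [← Real.log_inv]; congr 1; field_simp
    nlinarith [mul_le_mul_of_nonneg_left h1 ha, mul_div_cancel₀ b h.ne']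

/-- Log-sum inequality. -/
lemma aux_log_sum {ι : Type*} [Fintype ι] (p q : ι → ℝ)
    (hp : ∀ i, 0 ≤ p i) (hq : ∀ i, 0 ≤ q i) (hpq : ∀ i, q i = 0 → p i = 0)
    (hQ : 0 < ∑ i, q i) :
    (∑ i, p i) * Real.log ((∑ i, p i) / (∑ i, q i)) ≤
      ∑ i, p i * Real.log (p i / q i) := by
  set P := ∑ i, p i with hP
  set Q := ∑ i, q i with hQdef
  rcases eq_or_lt_of_le (Finset.sum_nonneg fun i _ => hp i : (0:ℝ) ≤ P) with h0 | h0
  · have hall : ∀ i, p i = 0 := by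
      intro i
      have := (Finset.sum_eq_zero_iff_of_nonneg (fun i _ => hp i)).1 h0.symm
      exact this i (Finset.mem_univ i)
    have hP0 : P = 0 := h0.symm
    rw [hP0]
    simp [hall]
  · have key : ∀ i, p i - q i * (P / Q) ≤ p i * Real.log (p i / q i) - p i * Real.log (P / Q) := by
      intro i
      rcases eq_or_lt_of_le (hq i) with hqi | hqi
      · have hpi : p i = 0 := hpq i hqi.symm
        simp [hpi, ← hqi]
      · have := aux_sub_le_mul_log (hp i) (b := q i * (P / Q)) (by positivity)
        rcases eq_or_lt_of_le (hp i) with hpi | hpi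
        · have hb : (0:ℝ) ≤ q i * (P / Q) :=
            mul_nonneg hqi.le (div_nonneg h0.le hQ.le)
          rw [← hpi]
          simpa using hb
        · have hlog : Real.log (p i / (q i * (P / Q))) =
              Real.log (p i / q i) - Real.log (P / Q) := by
            rw [div_mul_eq_div_div, Real.log_div (by positivity) (by positivity),
              Real.log_div hpi.ne' hqi.ne']
          rw [hlog] at this
          nlinarith
    have h1 := Finset.sum_le_sum (fun i (_ : i ∈ Finset.univ) => key i)
    have hsum : ∑ i, (p i - q i * (P / Q)) = 0 := by
      rw [Finset.sum_sub_distrib, ← Finset.sum_mul, ← hQdef, ← hP]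
      field_simp
      ring
    have h2 : ∑ i, (p i * Real.log (p i / q i) - p i * Real.log (P / Q)) =
        (∑ i, p i * Real.log (p i / q i)) - P * Real.log (P / Q) := by
      rw [Finset.sum_sub_distrib, ← Finset.sum_mul, ← hP]
    rw [hsum, h2] at h1
    linarith

theorem relativeEntropy_marginals_le_bregman {X Y : Type*} [Fintype X] [Fintype Y]
    (μ : X → ℝ) (R : X → Y → ℝ)
    (hμpos : ∀ x, 0 < μ x) (hμ : ∑ x, μ x = 1)
    (hR : ∀ x y, 0 ≤ R x y)
    (hrow : ∀ x, 0 < ∑ y, R x y) (hcol : ∀ y, 0 < ∑ x, R x y)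
    (φ φt : Y → ℝ) :
    ∑ y, gradF μ R φt y * Real.log (gradF μ R φt y / gradF μ R φ y) ≤
      Ffun μ R φ - Ffun μ R φt - ∑ y, gradF μ R φt y * (φ y - φt y) := by
  -- positivity of A(ψ,x)
  have hA : ∀ (ψ : Y → ℝ) (x : X), 0 < ∑ y, Real.exp (ψ y) * R x y := by
    intro ψ x
    obtain ⟨y, -, hy⟩ : ∃ y ∈ Finset.univ, 0 < R x y := by
      by_contra h
      push_neg at h
      have : ∑ y, R x y ≤ 0 := Finset.sum_nonpos fun y hy' => h y hy'
      exact absurd (hrow x) (not_lt.2 this)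
    exact Finset.sum_pos' (fun y _ => mul_nonneg (Real.exp_pos _).le (hR x y))
      ⟨y, Finset.mem_univ y, mul_pos (Real.exp_pos _) hy⟩
  have hexp : ∀ (ψ : Y → ℝ) (x : X),
      Real.exp (plusT μ R ψ x) = (∑ y, Real.exp (ψ y) * R x y) / μ x := by
    intro ψ x
    exact Real.exp_log (div_pos (hA ψ x) (hμpos x))
  -- coupling nonneg
  have hcnn : ∀ (ψ : Y → ℝ) (x : X) (y : Y), 0 ≤ coupling μ R ψ x y := by
    intro ψ x y; exact mul_nonneg (Real.exp_pos _).le (hR x y)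
  -- marginal over y
  have hmarg : ∀ (ψ : Y → ℝ) (x : X), ∑ y, coupling μ R ψ x y = μ x := by
    intro ψ x
    unfold coupling
    have : ∀ y, Real.exp (ψ y - plusT μ R ψ x) * R x y =
        Real.exp (-(plusT μ R ψ x)) * (Real.exp (ψ y) * R x y) := by
      intro y; rw [Real.exp_sub]; ring_nf; rw [Real.exp_neg]; ring
    rw [Finset.sum_congr rfl fun y _ => this y, ← Finset.mul_sum, Real.exp_neg, hexp]
    rw [inv_div]
    exact div_mul_cancel₀ _ (hA ψ x).ne'
  -- gradF positive
  have hgrad : ∀ (ψ : Y → ℝ) (y : Y), 0 < gradF μ R ψ y := by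
    intro ψ y
    obtain ⟨x, hx⟩ : ∃ x, 0 < R x y := by
      by_contra h
      push_neg at h
      have : ∑ x, R x y ≤ 0 := Finset.sum_nonpos fun x _ => h x
      exact absurd (hcol y) (not_lt.2 this)
    exact Finset.sum_pos' (fun x _ => hcnn ψ x y)
      ⟨x, Finset.mem_univ x, mul_pos (Real.exp_pos _) hx⟩
  -- per-term log identity
  have hterm : ∀ x y, coupling μ R φt x y *
      ((plusT μ R φ x - plusT μ R φt x) - (φ y - φt y)) =
      coupling μ R φt x y * Real.log (coupling μ R φt x y / coupling μ R φ x y) := by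
    intro x y
    rcases eq_or_lt_of_le (hR x y) with hr | hr
    · simp [coupling, ← hr]
    · congr 1
      unfold coupling
      rw [mul_div_mul_right _ _ hr.ne', ← Real.exp_sub, Real.log_exp]
      ring
  -- rewrite RHS
  have hRHS : Ffun μ R φ - Ffun μ R φt - ∑ y, gradF μ R φt y * (φ y - φt y) =
      ∑ y, ∑ x, coupling μ R φt x y *
        Real.log (coupling μ R φt x y / coupling μ R φ x y) := by
    have h1 : ∑ y, gradF μ R φt y * (φ y - φt y) =
        ∑ x, ∑ y, coupling μ R φt x y * (φ y - φt y) := by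
      rw [Finset.sum_comm]
      refine Finset.sum_congr rfl fun y _ => ?_
      rw [gradF, Finset.sum_mul]
    have h2 : Ffun μ R φ - Ffun μ R φt =
        ∑ x, ∑ y, coupling μ R φt x y * (plusT μ R φ x - plusT μ R φt x) := by
      unfold Ffun
      rw [← Finset.sum_sub_distrib]
      refine Finset.sum_congr rfl fun x _ => ?_
      rw [← Finset.sum_mul, hmarg]
      ring
    rw [h2, h1, ← Finset.sum_sub_distrib, Finset.sum_comm]
    refine Finset.sum_congr rfl fun y _ => ?_
    rw [← Finset.sum_sub_distrib]
    refine Finset.sum_congr rfl fun x _ => ?_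
    rw [← hterm]
    ring
  rw [hRHS]
  refine Finset.sum_le_sum fun y _ => ?_
  have := aux_log_sum (fun x => coupling μ R φt x y) (fun x => coupling μ R φ x y)
    (fun x => hcnn φt x y) (fun x => hcnn φ x y)
    (fun x h => by
      unfold coupling at h ⊢
      rcases mul_eq_zero.1 h with h' | h'
      · exact absurd h' (Real.exp_ne_zero _)
      · simp [h'])
    (hgrad φ y)
  exact this
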